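/- arXiv:2601.01607 — 2 statements merged into one kernel-verified Lean document; each statement's English description precedes it below -/
import Mathlib

section
/- For every random valuation X with values in ℝ_+^k and finite expectation, the optimal revenue satisfies Rev_Γ(X) = sup_{b ∈ B_Γ} E[b′(X;X) − b(X)], where the supremum on the right is over all functions b in B_Γ. -/
open MeasureTheory Filter

noncomputable section

abbrev E (k : ℕ) := EuclideanSpace ℝ (Fin k)

def orthant (k : ℕ) : Set (E k) := {x | ∀ i, 0 ≤ x i}

/-- The dot product `g · x` on `ℝ^k`. -/
def dotp {k : ℕ} (g x : E k) : ℝ := ∑ i, g i * x i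

def IsAlloc {k : ℕ} (Γ : Set (E k)) (q : E k → E k) : Prop :=
  ∀ x ∈ orthant k, q x ∈ Γ

def IsIC {k : ℕ} (q : E k → E k) (s : E k → ℝ) : Prop :=
  ∀ x ∈ orthant k, ∀ y ∈ orthant k, dotp (q x) x - s x ≥ dotp (q y) x - s y

def IsIR {k : ℕ} (q : E k → E k) (s : E k → ℝ) : Prop :=
  ∀ x ∈ orthant k, 0 ≤ dotp (q x) x - s x

def IsNPT {k : ℕ} (s : E k → ℝ) : Prop :=
  ∀ x ∈ orthant k, 0 ≤ s x

/-- The set of subgradients of `f` at `x`. -/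
def Subgrad {k : ℕ} (f : E k → ℝ) (x : E k) : Set (E k) :=
  {g | ∀ y, f y - f x ≥ dotp g (y - x)}

/-- `b ∈ B_Γ`: convex on `ℝ^k`, `b 0 = 0`, and a subgradient in `Γ` at every point. -/
def BClass {k : ℕ} (Γ : Set (E k)) (b : E k → ℝ) : Prop :=
  ConvexOn ℝ Set.univ b ∧ b 0 = 0 ∧ ∀ x, (Subgrad b x ∩ Γ).Nonempty

/-- One-sided directional derivative `f′(x;y) = lim_{δ→0⁺} (f(x+δy)-f(x))/δ`. -/
def dirDeriv {k : ℕ} (b : E k → ℝ) (x y : E k) : ℝ :=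
  limUnder (nhdsWithin (0:ℝ) (Set.Ioi 0)) fun δ => (b (x + δ • y) - b x) / δ

/-- The extended buyer payoff function `b(x) = sup_{z ∈ ℝ₊^k} [q(z)·x − s(z)]`. -/
def extPayoff {k : ℕ} (q : E k → E k) (s : E k → ℝ) (x : E k) : ℝ :=
  sSup ((fun z => dotp (q z) x - s z) '' orthant k)

def SellerFavorable {k : ℕ} (q : E k → E k) (s : E k → ℝ) : Prop :=
  ∀ x ∈ orthant k, s x = dirDeriv (extPayoff q s) x x - extPayoff q s x

variable {k : ℕ}

lemma dotp_eq_inner (g x : E k) : dotp g x = inner ℝ g x := by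
  simp [dotp, PiLp.inner_apply, RCLike.inner_apply', conj_trivial]
  exact Finset.sum_congr rfl fun i _ => mul_comm _ _

lemma abs_dotp_le (g x : E k) : |dotp g x| ≤ ‖g‖ * ‖x‖ := by
  rw [dotp_eq_inner]; exact abs_real_inner_le_norm g x

lemma dotp_sub (g x y : E k) : dotp g (y - x) = dotp g y - dotp g x := by
  simp [dotp_eq_inner, inner_sub_right]

lemma dotp_smul (g : E k) (δ : ℝ) (x : E k) : dotp g (δ • x) = δ * dotp g x := by
  rw [dotp_eq_inner, dotp_eq_inner, real_inner_smul_right]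

lemma dotp_zero (g : E k) : dotp g 0 = 0 := by simp [dotp]

lemma dotp_nonneg {g x : E k} (hg : g ∈ orthant k) (hx : x ∈ orthant k) : 0 ≤ dotp g x :=
  Finset.sum_nonneg fun i _ => mul_nonneg (hg i) (hx i)

lemma slope_mono {b : E k → ℝ} (hconv : ConvexOn ℝ Set.univ b) (x : E k) :
    MonotoneOn (fun δ : ℝ => (b (x + δ • x) - b x) / δ) (Set.Ioi 0) := by
  rintro δ1 (h1 : 0 < δ1) δ2 (h2 : 0 < δ2) h12
  have ht0 : 0 ≤ δ1 / δ2 := (div_pos h1 h2).le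
  have ht1 : δ1 / δ2 ≤ 1 := div_le_one_of_le₀ h12 h2.le
  have hpt : x + δ1 • x = (1 - δ1 / δ2) • x + (δ1 / δ2) • (x + δ2 • x) := by
    rw [smul_add, smul_smul, div_mul_cancel₀ δ1 h2.ne', sub_smul, one_smul]; abel
  have key : b (x + δ1 • x) ≤ (1 - δ1 / δ2) * b x + (δ1 / δ2) * b (x + δ2 • x) := by
    rw [hpt]
    simpa using hconv.2 (Set.mem_univ x) (Set.mem_univ (x + δ2 • x))
      (by linarith) ht0 (by ring)
  have key' : δ2 * b (x + δ1 • x) ≤ (δ2 - δ1) * b x + δ1 * b (x + δ2 • x) := by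
    calc δ2 * b (x + δ1 • x)
        ≤ δ2 * ((1 - δ1 / δ2) * b x + (δ1 / δ2) * b (x + δ2 • x)) :=
          mul_le_mul_of_nonneg_left key h2.le
      _ = (δ2 - δ1) * b x + δ1 * b (x + δ2 • x) := by field_simp
  show (b (x + δ1 • x) - b x) / δ1 ≤ (b (x + δ2 • x) - b x) / δ2
  rw [div_le_div_iff₀ h1 h2]; linarith

lemma slope_ge {b : E k → ℝ} {g x : E k} (hg : g ∈ Subgrad b x) {δ : ℝ} (hδ : 0 < δ) :
    dotp g x ≤ (b (x + δ • x) - b x) / δ := by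
  have h := hg (x + δ • x)
  have h2 : x + δ • x - x = δ • x := by abel
  rw [h2, dotp_smul] at h
  rw [le_div_iff₀ hδ]; linarith

lemma dirDeriv_eq_sInf {b : E k → ℝ} (hconv : ConvexOn ℝ Set.univ b)
    {x : E k} (hsub : (Subgrad b x).Nonempty) :
    dirDeriv b x x = sInf ((fun δ : ℝ => (b (x + δ • x) - b x) / δ) '' Set.Ioi 0) := by
  obtain ⟨g, hg⟩ := hsub
  have hbdd : BddBelow ((fun δ : ℝ => (b (x + δ • x) - b x) / δ) '' Set.Ioi 0) := by
    refine ⟨dotp g x, ?_⟩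
    rintro r ⟨δ, hδ, rfl⟩
    exact slope_ge hg hδ
  exact ((slope_mono hconv x).tendsto_nhdsGT hbdd).limUnder_eq

lemma tendsto_slope {b : E k → ℝ} (hconv : ConvexOn ℝ Set.univ b)
    {x : E k} (hsub : (Subgrad b x).Nonempty) :
    Tendsto (fun δ : ℝ => (b (x + δ • x) - b x) / δ) (nhdsWithin 0 (Set.Ioi 0))
      (nhds (dirDeriv b x x)) := by
  obtain ⟨g, hg⟩ := hsub
  have hbdd : BddBelow ((fun δ : ℝ => (b (x + δ • x) - b x) / δ) '' Set.Ioi 0) := by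
    refine ⟨dotp g x, ?_⟩
    rintro r ⟨δ, hδ, rfl⟩
    exact slope_ge hg hδ
  rw [dirDeriv_eq_sInf hconv ⟨g, hg⟩]
  exact (slope_mono hconv x).tendsto_nhdsGT hbdd

lemma subgrad_le_dirDeriv {b : E k → ℝ} (hconv : ConvexOn ℝ Set.univ b)
    {x g : E k} (hg : g ∈ Subgrad b x) : dotp g x ≤ dirDeriv b x x := by
  rw [dirDeriv_eq_sInf hconv ⟨g, hg⟩]
  refine le_csInf ⟨_, ⟨1, by simp, rfl⟩⟩ ?_
  rintro r ⟨δ, hδ, rfl⟩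
  exact slope_ge hg hδ

lemma dirDeriv_le_slope {b : E k → ℝ} (hconv : ConvexOn ℝ Set.univ b)
    {x : E k} (hsub : (Subgrad b x).Nonempty) {δ : ℝ} (hδ : 0 < δ) :
    dirDeriv b x x ≤ (b (x + δ • x) - b x) / δ := by
  obtain ⟨g, hg⟩ := hsub
  rw [dirDeriv_eq_sInf hconv ⟨g, hg⟩]
  refine csInf_le ⟨dotp g x, ?_⟩ ⟨δ, hδ, rfl⟩
  rintro r ⟨δ', hδ', rfl⟩
  exact slope_ge hg hδ'

lemma sub_lip {Γ : Set (E k)} {M : ℝ} {b : E k → ℝ} (hM : ∀ g ∈ Γ, ‖g‖ ≤ M)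
    (hb : ∀ z, (Subgrad b z ∩ Γ).Nonempty) (x y : E k) :
    b y - b x ≤ M * ‖y - x‖ := by
  obtain ⟨g, hg, hgΓ⟩ := hb y
  have h := hg x
  rw [dotp_sub] at h
  calc b y - b x ≤ dotp g (y - x) := by rw [dotp_sub]; linarith
    _ ≤ |dotp g (y - x)| := le_abs_self _
    _ ≤ ‖g‖ * ‖y - x‖ := abs_dotp_le _ _
    _ ≤ M * ‖y - x‖ := mul_le_mul_of_nonneg_right (hM g hgΓ) (norm_nonneg _)

lemma lip_of_subgrad {Γ : Set (E k)} {M : ℝ} {b : E k → ℝ} (hM : ∀ g ∈ Γ, ‖g‖ ≤ M)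
    (hb : ∀ z, (Subgrad b z ∩ Γ).Nonempty) :
    LipschitzWith (Real.toNNReal M) b := by
  have hM0 : 0 ≤ M := by
    obtain ⟨g, _, hgΓ⟩ := hb 0
    exact (norm_nonneg g).trans (hM g hgΓ)
  apply LipschitzWith.of_dist_le_mul
  intro x y
  rw [Real.dist_eq, Real.coe_toNNReal _ hM0, dist_eq_norm, abs_sub_le_iff]
  constructor
  · exact sub_lip hM hb y x
  · rw [norm_sub_rev]; exact sub_lip hM hb x y

lemma subgrad_limit {b : E k → ℝ} {x g : E k} {xs gs : ℕ → E k} {cs : ℕ → ℝ}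
    (hineq : ∀ n y, b y - cs n ≥ dotp (gs n) (y - xs n))
    (hx : Tendsto xs atTop (nhds x)) (hg : Tendsto gs atTop (nhds g))
    (hc : Tendsto cs atTop (nhds (b x))) : g ∈ Subgrad b x := by
  intro y
  have h1 : Tendsto (fun n => dotp (gs n) (y - xs n)) atTop (nhds (dotp g (y - x))) := by
    simp only [dotp_eq_inner]
    exact hg.inner (tendsto_const_nhds.sub hx)
  have h2 : Tendsto (fun n => b y - cs n) atTop (nhds (b y - b x)) := tendsto_const_nhds.sub hc
  exact le_of_tendsto_of_tendsto' h1 h2 fun n => hineq n y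

lemma delta_seq : Tendsto (fun n : ℕ => 1 / ((n:ℝ) + 1)) atTop (nhdsWithin 0 (Set.Ioi 0)) := by
  apply tendsto_nhdsWithin_of_tendsto_nhds_of_eventually_within
  · exact tendsto_one_div_add_atTop_nhds_zero_nat
  · exact Eventually.of_forall fun n => Set.mem_Ioi.mpr (by positivity)
lemma exists_achieving_subgrad {Γ : Set (E k)} (hΓc : IsCompact Γ) {b : E k → ℝ}
    (hconv : ConvexOn ℝ Set.univ b) (hb : ∀ z, (Subgrad b z ∩ Γ).Nonempty)
    (hcont : Continuous b) (x : E k) :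
    ∃ g ∈ Γ, g ∈ Subgrad b x ∧ dotp g x = dirDeriv b x x := by
  have hδpos : ∀ n : ℕ, 0 < 1 / ((n:ℝ) + 1) := fun n => by positivity
  set δ : ℕ → ℝ := fun n => 1 / ((n:ℝ) + 1) with hδdef
  have hδto : Tendsto δ atTop (nhdsWithin 0 (Set.Ioi 0)) := delta_seq
  choose gs hgs using fun n => hb (x + δ n • x)
  obtain ⟨g, hgΓ, φ, hφ, hgt⟩ := hΓc.tendsto_subseq (fun n => (hgs n).2)
  have hδφ : Tendsto (fun n => δ (φ n)) atTop (nhdsWithin 0 (Set.Ioi 0)) :=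
    hδto.comp hφ.tendsto_atTop
  have hδφ' : Tendsto (fun n => δ (φ n)) atTop (nhds 0) := hδφ.mono_right nhdsWithin_le_nhds
  have hxsto : Tendsto (fun n => x + δ (φ n) • x) atTop (nhds x) := by
    have h0 : Tendsto (fun n => δ (φ n) • x) atTop (nhds ((0:ℝ) • x)) := hδφ'.smul_const x
    simpa using tendsto_const_nhds.add h0
  have hgsub : g ∈ Subgrad b x := by
    apply subgrad_limit (xs := fun n => x + δ (φ n) • x) (gs := fun n => gs (φ n))
      (cs := fun n => b (x + δ (φ n) • x))
    · intro n y; exact (hgs (φ n)).1 y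
    · exact hxsto
    · exact hgt
    · exact ((hcont.tendsto x).comp hxsto)
  have hdotto : Tendsto (fun n => dotp (gs (φ n)) x) atTop (nhds (dotp g x)) := by
    simp only [dotp_eq_inner]
    exact hgt.inner tendsto_const_nhds
  have hslope := tendsto_slope hconv ⟨g, hgsub⟩ (x := x)
  refine ⟨g, hgΓ, hgsub, le_antisymm ?_ ?_⟩
  · -- dotp g x ≤ dirDeriv
    have h2δφ : Tendsto (fun n => 2 * δ (φ n)) atTop (nhdsWithin 0 (Set.Ioi 0)) := by
      apply tendsto_nhdsWithin_of_tendsto_nhds_of_eventually_within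
      · simpa using hδφ'.const_mul 2
      · exact Eventually.of_forall fun n => Set.mem_Ioi.mpr (by positivity)
    have hu : Tendsto (fun n => 2 * ((b (x + (2 * δ (φ n)) • x) - b x) / (2 * δ (φ n)))
        - (b (x + δ (φ n) • x) - b x) / δ (φ n)) atTop (nhds (dirDeriv b x x)) := by
      have := ((hslope.comp h2δφ).const_mul 2).sub (hslope.comp hδφ)
      have heq : 2 * dirDeriv b x x - dirDeriv b x x = dirDeriv b x x := by ring
      rw [heq] at this
      exact this
    refine le_of_tendsto_of_tendsto' hdotto hu fun n => ?_
    set d := δ (φ n) with hd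
    have hdpos : 0 < d := hδpos (φ n)
    have h1 := (hgs (φ n)).1 (x + (2 * d) • x)
    have hdiff : (x + (2 * d) • x) - (x + d • x) = d • x := by module
    rw [hdiff, dotp_smul] at h1
    have h2 : dotp (gs (φ n)) x ≤ (b (x + (2 * d) • x) - b (x + d • x)) / d := by
      rw [le_div_iff₀ hdpos]; linarith
    have h3 : (b (x + (2 * d) • x) - b (x + d • x)) / d
        = 2 * ((b (x + (2 * d) • x) - b x) / (2 * d)) - (b (x + d • x) - b x) / d := by
      field_simp; ring
    linarith [h2, h3.le, h3.ge]
  · -- dirDeriv ≤ dotp g x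
    refine ge_of_tendsto' hdotto fun n => ?_
    set d := δ (φ n) with hd
    have hdpos : 0 < d := hδpos (φ n)
    have h1 := (hgs (φ n)).1 x
    have hdiff : x - (x + d • x) = (-d) • x := by module
    rw [hdiff, dotp_smul] at h1
    have h2 : (b (x + d • x) - b x) / d ≤ dotp (gs (φ n)) x := by
      rw [div_le_iff₀ hdpos]; linarith
    exact le_trans (dirDeriv_le_slope hconv ⟨g, hgsub⟩ hdpos) h2
section EP
variable {Γ : Set (E k)} {q : E k → E k} {s : E k → ℝ}

lemma dotp_add (g x y : E k) : dotp g (x + y) = dotp g x + dotp g y := by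
  simp [dotp_eq_inner, inner_add_right]

lemma dotp_mono {g x y : E k} (hg : g ∈ orthant k) (h : ∀ i, x i ≤ y i) :
    dotp g x ≤ dotp g y :=
  Finset.sum_le_sum fun i _ => mul_le_mul_of_nonneg_left (h i) (hg i)

/-- positive part -/
def posPart' (x : E k) : E k := WithLp.toLp 2 (fun i => max (x i) 0)

lemma posPart'_mem (x : E k) : posPart' x ∈ orthant k := fun i => le_max_right _ _

lemma le_posPart' (x : E k) (i : Fin k) : x i ≤ posPart' x i := le_max_left _ _

lemma ep_bddAbove (hΓ : Γ ⊆ orthant k) (hA : IsAlloc Γ q) (hIC : IsIC q s) (x : E k) :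
    BddAbove ((fun z => dotp (q z) x - s z) '' orthant k) := by
  refine ⟨dotp (q (posPart' x)) (posPart' x) - s (posPart' x), ?_⟩
  rintro r ⟨z, hz, rfl⟩
  have h1 : dotp (q z) x ≤ dotp (q z) (posPart' x) :=
    dotp_mono (hΓ (hA z hz)) (le_posPart' x)
  have h2 := hIC (posPart' x) (posPart'_mem x) z hz
  dsimp only
  linarith

lemma ep_nonempty (x : E k) :
    ((fun z => dotp (q z) x - s z) '' orthant k).Nonempty :=
  ⟨_, ⟨0, fun i => le_refl 0, rfl⟩⟩

lemma ep_eq_u (hΓ : Γ ⊆ orthant k) (hA : IsAlloc Γ q) (hIC : IsIC q s)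
    {x : E k} (hx : x ∈ orthant k) : extPayoff q s x = dotp (q x) x - s x := by
  refine le_antisymm (csSup_le (ep_nonempty x) ?_) (le_csSup (ep_bddAbove hΓ hA hIC x) ⟨x, hx, rfl⟩)
  rintro r ⟨z, hz, rfl⟩
  exact hIC x hx z hz

lemma ep_convex (hΓ : Γ ⊆ orthant k) (hA : IsAlloc Γ q) (hIC : IsIC q s) :
    ConvexOn ℝ Set.univ (extPayoff q s) := by
  refine ⟨convex_univ, fun x _ y _ a c ha hc hac => ?_⟩
  refine csSup_le (ep_nonempty _) ?_
  rintro r ⟨z, hz, rfl⟩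
  dsimp only
  have h1 : dotp (q z) (a • x + c • y) - s z
      = a * (dotp (q z) x - s z) + c * (dotp (q z) y - s z) := by
    rw [dotp_add, dotp_smul, dotp_smul]; linear_combination s z * hac
  rw [h1]
  have h2 : dotp (q z) x - s z ≤ extPayoff q s x :=
    le_csSup (ep_bddAbove hΓ hA hIC x) ⟨z, hz, rfl⟩
  have h3 : dotp (q z) y - s z ≤ extPayoff q s y :=
    le_csSup (ep_bddAbove hΓ hA hIC y) ⟨z, hz, rfl⟩
  simp only [smul_eq_mul]
  exact add_le_add (mul_le_mul_of_nonneg_left h2 ha) (mul_le_mul_of_nonneg_left h3 hc)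

lemma ep_subgrad_orthant (hΓ : Γ ⊆ orthant k) (hA : IsAlloc Γ q) (hIC : IsIC q s)
    {x : E k} (hx : x ∈ orthant k) : q x ∈ Subgrad (extPayoff q s) x := by
  intro y
  have h1 : dotp (q x) y - s x ≤ extPayoff q s y :=
    le_csSup (ep_bddAbove hΓ hA hIC y) ⟨x, hx, rfl⟩
  have h2 : extPayoff q s x = dotp (q x) x - s x := ep_eq_u hΓ hA hIC hx
  rw [dotp_sub]; linarith

lemma ep_subgrad_all (hΓc : IsCompact Γ) (hΓ : Γ ⊆ orthant k) (hA : IsAlloc Γ q)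
    (hIC : IsIC q s) (x : E k) : (Subgrad (extPayoff q s) x ∩ Γ).Nonempty := by
  obtain ⟨u, hu_mono, hu_t, hu_mem⟩ :=
    exists_seq_tendsto_sSup (ep_nonempty (q := q) (s := s) x) (ep_bddAbove hΓ hA hIC x)
  choose zs hzs hzval using hu_mem
  obtain ⟨g, hgΓ, φ, hφ, hgt⟩ := hΓc.tendsto_subseq (fun n => hA (zs n) (hzs n))
  refine ⟨g, ?_, hgΓ⟩
  apply subgrad_limit (xs := fun _ => x) (gs := fun n => q (zs (φ n)))
    (cs := fun n => u (φ n))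
  · intro n y
    have h1 : dotp (q (zs (φ n))) y - s (zs (φ n)) ≤ extPayoff q s y :=
      le_csSup (ep_bddAbove hΓ hA hIC y) ⟨zs (φ n), hzs (φ n), rfl⟩
    have h2 : dotp (q (zs (φ n))) x - s (zs (φ n)) = u (φ n) := hzval (φ n)
    rw [dotp_sub]; linarith
  · exact tendsto_const_nhds
  · exact hgt
  · exact hu_t.comp hφ.tendsto_atTop
end EP
section BC
variable {Γ : Set (E k)} {M : ℝ} {b : E k → ℝ}

lemma bclass_abs_b (hM : ∀ g ∈ Γ, ‖g‖ ≤ M) (hb : BClass Γ b) (x : E k) :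
    |b x| ≤ M * ‖x‖ := by
  have h1 := sub_lip hM hb.2.2 0 x
  have h2 := sub_lip hM hb.2.2 x 0
  rw [hb.2.1] at h1 h2
  simp only [sub_zero, zero_sub, norm_neg] at h1 h2
  exact abs_le.mpr ⟨by linarith, h1⟩

lemma bclass_dd_le (hM : ∀ g ∈ Γ, ‖g‖ ≤ M) (hb : BClass Γ b) (x : E k) :
    |dirDeriv b x x| ≤ M * ‖x‖ := by
  obtain ⟨g, hg, hgΓ⟩ := hb.2.2 x
  have hub : dirDeriv b x x ≤ M * ‖x‖ := by
    have h1 := dirDeriv_le_slope hb.1 ⟨g, hg⟩ one_pos (x := x)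
    rw [one_smul, div_one] at h1
    have h2 : b (x + x) - b x ≤ M * ‖(x + x) - x‖ := sub_lip hM hb.2.2 x (x + x)
    have h3 : (x + x) - x = x := by abel
    rw [h3] at h2
    linarith
  have hlb : -(M * ‖x‖) ≤ dirDeriv b x x := by
    have h1 := subgrad_le_dirDeriv hb.1 hg
    have h2 : -(M * ‖x‖) ≤ dotp g x := by
      have := abs_dotp_le g x
      have h4 : ‖g‖ * ‖x‖ ≤ M * ‖x‖ := mul_le_mul_of_nonneg_right (hM g hgΓ) (norm_nonneg _)
      have h5 := neg_abs_le (dotp g x)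
      linarith
    linarith
  exact abs_le.mpr ⟨hlb, hub⟩
end BC
section BC2
variable {Γ : Set (E k)} {M : ℝ} {b : E k → ℝ}

lemma bclass_tendsto_dd (hb : BClass Γ b) (x : E k) :
    Tendsto (fun n : ℕ => (b (x + (1/((n:ℝ)+1)) • x) - b x) / (1/((n:ℝ)+1))) atTop
      (nhds (dirDeriv b x x)) :=
  (tendsto_slope hb.1 ⟨(hb.2.2 x).choose, (hb.2.2 x).choose_spec.1⟩).comp delta_seq

lemma bclass_integrable {Ω : Type*} [MeasurableSpace Ω] (P : Measure Ω)
    [IsProbabilityMeasure P] (X : Ω → E k) (hXm : Measurable X)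
    (hXint : Integrable (fun ω => ‖X ω‖) P)
    (hM : ∀ g ∈ Γ, ‖g‖ ≤ M) (hb : BClass Γ b) :
    Integrable (fun ω => dirDeriv b (X ω) (X ω) - b (X ω)) P := by
  have hcont : Continuous b := (lip_of_subgrad hM hb.2.2).continuous
  have haesm : AEStronglyMeasurable (fun ω => dirDeriv b (X ω) (X ω)) P := by
    apply aestronglyMeasurable_of_tendsto_ae (atTop : Filter ℕ)
      (f := fun n ω => (b (X ω + (1/((n:ℝ)+1)) • X ω) - b (X ω)) / (1/((n:ℝ)+1)))
    · intro n
      have hc : Continuous fun v : E k => (b (v + (1/((n:ℝ)+1)) • v) - b v) / (1/((n:ℝ)+1)) :=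
        ((hcont.comp (continuous_id.add (continuous_id.const_smul (1/((n:ℝ)+1))))).sub hcont).div_const _
      exact (hc.measurable.comp hXm).aestronglyMeasurable
    · exact ae_of_all _ fun ω => bclass_tendsto_dd hb (X ω)
  have hsm_b : AEStronglyMeasurable (fun ω => b (X ω)) P :=
    (hcont.measurable.comp hXm).aestronglyMeasurable
  refine Integrable.mono' (g := fun ω => (2*M) * ‖X ω‖) (hXint.const_mul (2*M))
    (haesm.sub hsm_b) (ae_of_all _ fun ω => ?_)
  have h1 := bclass_abs_b hM hb (X ω)
  have h2 := bclass_dd_le hM hb (X ω)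
  rw [Real.norm_eq_abs]
  have h3 := abs_le.mp h1
  have h4 := abs_le.mp h2
  obtain ⟨h3a, h3b⟩ := h3
  obtain ⟨h4a, h4b⟩ := h4
  refine abs_le.mpr ⟨by linarith, by linarith⟩

lemma bclass_integrand_le (hM : ∀ g ∈ Γ, ‖g‖ ≤ M) (hb : BClass Γ b) (x : E k) :
    dirDeriv b x x - b x ≤ (2*M) * ‖x‖ := by
  have h1 := abs_le.mp (bclass_abs_b hM hb x)
  have h2 := abs_le.mp (bclass_dd_le hM hb x)
  linarith
end BC2
lemma dotp_neg (g x : E k) : dotp g (-x) = -(dotp g x) := by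
  simp [dotp_eq_inner, inner_neg_right]

lemma bclass_integrand_nonneg {Γ : Set (E k)} {b : E k → ℝ} (hb : BClass Γ b) (x : E k) :
    0 ≤ dirDeriv b x x - b x := by
  obtain ⟨g, hg, _⟩ := hb.2.2 x
  have h1 := subgrad_le_dirDeriv hb.1 hg
  have h2 := hg 0
  rw [hb.2.1, zero_sub, zero_sub, dotp_neg] at h2
  linarith

lemma zero_mem_orthant : (0 : E k) ∈ orthant k := fun _ => le_refl 0
/-- the optimal revenue equals the supremum over `b ∈ B_Γ` of
`E[b′(X;X) − b(X)]`. -/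
theorem stmt17 {k : ℕ} (hk : 1 ≤ k) (Γ : Set (E k)) (hΓne : Γ.Nonempty)
    (hΓc : IsCompact Γ) (hΓ : Γ ⊆ orthant k)
    {Ω : Type*} [MeasurableSpace Ω] (P : Measure Ω) [IsProbabilityMeasure P]
    (X : Ω → E k) (hXm : Measurable X) (hXpos : ∀ ω, X ω ∈ orthant k)
    (hXint : Integrable (fun ω => ‖X ω‖) P) :
    sSup {r : ℝ | ∃ q : E k → E k, ∃ s : E k → ℝ,
        IsAlloc Γ q ∧ IsIC q s ∧ IsIR q s ∧ r = ∫ ω, s (X ω) ∂P} =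
    sSup {r : ℝ | ∃ b : E k → ℝ, BClass Γ b ∧
        r = ∫ ω, (dirDeriv b (X ω) (X ω) - b (X ω)) ∂P} := by
  obtain ⟨M, hM⟩ := hΓc.isBounded.exists_norm_le
  obtain ⟨g₀, hg₀⟩ := hΓne
  have hM0 : 0 ≤ M := le_trans (norm_nonneg _) (hM _ hg₀)
  -- zero element of A
  have h0A : (0:ℝ) ∈ {r : ℝ | ∃ q : E k → E k, ∃ s : E k → ℝ,
      IsAlloc Γ q ∧ IsIC q s ∧ IsIR q s ∧ r = ∫ ω, s (X ω) ∂P} := by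
    refine ⟨fun _ => g₀, fun _ => 0, fun x _ => hg₀, fun x _ y _ => le_refl _,
      fun x hx => ?_, by simp⟩
    simpa using dotp_nonneg (hΓ hg₀) hx
  -- linear element of B
  have hblin : BClass Γ (fun x => dotp g₀ x) := by
    refine ⟨⟨convex_univ, fun x _ y _ a c ha hc hac => ?_⟩, dotp_zero g₀, fun x => ?_⟩
    · simp only [smul_eq_mul, dotp_add, dotp_smul]
      exact le_refl _
    · exact ⟨g₀, fun y => by rw [dotp_sub], hg₀⟩
  have hdd_lin : ∀ x : E k, dirDeriv (fun x => dotp g₀ x) x x = dotp g₀ x := by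
    intro x
    apply Filter.Tendsto.limUnder_eq
    apply Tendsto.congr' (f₁ := fun _ => dotp g₀ x) ?_ tendsto_const_nhds
    filter_upwards [self_mem_nhdsWithin] with δ (hδ : (0:ℝ) < δ)
    rw [dotp_add, dotp_smul]
    field_simp
    ring
  have h0B : (0:ℝ) ∈ {r : ℝ | ∃ b : E k → ℝ, BClass Γ b ∧
      r = ∫ ω, (dirDeriv b (X ω) (X ω) - b (X ω)) ∂P} := by
    refine ⟨fun x => dotp g₀ x, hblin, ?_⟩
    simp [hdd_lin]
  -- bounded above
  have hbddA : BddAbove {r : ℝ | ∃ q : E k → E k, ∃ s : E k → ℝ,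
      IsAlloc Γ q ∧ IsIC q s ∧ IsIR q s ∧ r = ∫ ω, s (X ω) ∂P} := by
    refine ⟨∫ ω, M * ‖X ω‖ ∂P, ?_⟩
    rintro r ⟨q, s, hA, hIC, hIR, rfl⟩
    by_cases hint : Integrable (fun ω => s (X ω)) P
    · refine integral_mono hint (hXint.const_mul M) fun ω => ?_
      have hIRω := hIR (X ω) (hXpos ω)
      have h1 : dotp (q (X ω)) (X ω) ≤ M * ‖X ω‖ :=
        le_trans (le_abs_self _) ((abs_dotp_le _ _).trans
          (mul_le_mul_of_nonneg_right (hM _ (hA _ (hXpos ω))) (norm_nonneg _)))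
      dsimp only; linarith
    · rw [integral_undef hint]
      exact integral_nonneg fun ω => mul_nonneg hM0 (norm_nonneg _)
  have hbddB : BddAbove {r : ℝ | ∃ b : E k → ℝ, BClass Γ b ∧
      r = ∫ ω, (dirDeriv b (X ω) (X ω) - b (X ω)) ∂P} := by
    refine ⟨∫ ω, (2*M) * ‖X ω‖ ∂P, ?_⟩
    rintro r ⟨b, hb, rfl⟩
    exact integral_mono (bclass_integrable P X hXm hXint hM hb) (hXint.const_mul (2*M))
      fun ω => bclass_integrand_le hM hb (X ω)
  apply le_antisymm
  · refine csSup_le ⟨0, h0A⟩ ?_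
    rintro r ⟨q, s, hA, hIC, hIR, rfl⟩
    have hconv := ep_convex hΓ hA hIC (q := q) (s := s)
    have hsuball := ep_subgrad_all hΓc hΓ hA hIC (q := q) (s := s)
    set b : E k → ℝ := extPayoff q s with hbdef
    have hsub0 : ∀ x, Subgrad (fun y => b y - b 0) x = Subgrad b x := by
      intro x
      ext g
      constructor <;> exact fun h y => by have := h y; dsimp only at this ⊢; linarith
    have hb0class : BClass Γ (fun y => b y - b 0) := by
      refine ⟨⟨convex_univ, fun x _ y _ a c ha hc hac => ?_⟩, by simp, fun x => by
        rw [hsub0]; exact hsuball x⟩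
      have h1 := hconv.2 (Set.mem_univ x) (Set.mem_univ y) ha hc hac
      have h2 : a * b 0 + c * b 0 = b 0 := by linear_combination b 0 * hac
      simp only [smul_eq_mul] at h1 ⊢
      linarith
    have hdd0 : ∀ x, dirDeriv (fun y => b y - b 0) x x = dirDeriv b x x := by
      intro x
      unfold dirDeriv
      congr 1
      funext δ
      dsimp only
      ring
    have hle : ∫ ω, s (X ω) ∂P ≤ ∫ ω, (dirDeriv (fun y => b y - b 0) (X ω) (X ω)
        - (b (X ω) - b 0)) ∂P := by
      by_cases hint : Integrable (fun ω => s (X ω)) P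
      · refine integral_mono hint (bclass_integrable P X hXm hXint hM hb0class) fun ω => ?_
        have hx := hXpos ω
        have h1 : q (X ω) ∈ Subgrad b (X ω) := ep_subgrad_orthant hΓ hA hIC hx
        have h2 : dotp (q (X ω)) (X ω) ≤ dirDeriv b (X ω) (X ω) :=
          subgrad_le_dirDeriv hconv h1
        have h3 : b (X ω) = dotp (q (X ω)) (X ω) - s (X ω) := ep_eq_u hΓ hA hIC hx
        have h4 : 0 ≤ b 0 := by
          rw [hbdef, ep_eq_u hΓ hA hIC zero_mem_orthant, dotp_zero]
          have := hIR 0 zero_mem_orthant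
          rw [dotp_zero] at this
          linarith
        dsimp only
        rw [hdd0]
        linarith
      · rw [integral_undef hint]
        exact integral_nonneg fun ω => bclass_integrand_nonneg hb0class (X ω)
    exact hle.trans (le_csSup hbddB ⟨fun y => b y - b 0, hb0class, rfl⟩)
  · refine csSup_le_csSup hbddA ⟨0, h0B⟩ ?_
    rintro r ⟨b, hb, rfl⟩
    have hcont : Continuous b := (lip_of_subgrad hM hb.2.2).continuous
    choose qf hq using fun x => exists_achieving_subgrad hΓc hb.1 hb.2.2 hcont x
    refine ⟨qf, fun x => dotp (qf x) x - b x, fun x _ => (hq x).1, ?_, ?_, ?_⟩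
    · intro x hx y hy
      have h := (hq y).2.1 x
      rw [dotp_sub] at h
      dsimp only
      linarith
    · intro x hx
      obtain ⟨g0, hg0s, hg0Γ⟩ := hb.2.2 0
      have h := hg0s x
      rw [hb.2.1, sub_zero, sub_zero] at h
      have h2 : 0 ≤ dotp g0 x := dotp_nonneg (hΓ hg0Γ) hx
      dsimp only
      linarith
    · apply integral_congr_ae
      refine ae_of_all _ fun ω => ?_
      dsimp only
      rw [← (hq (X ω)).2.2]
end
end

section
/- Let b : ℝ^k → ℝ be a convex function. Then the seller-favorable payment function s*(x) := b′(x;x) − b(x) is upper semicontinuous on ℝ^k, where b′(x;y) := lim_{δ→0+} (b(x+δy) − b(x))/δ is the one-sided directional derivative of b at x in direction y. -/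
open MeasureTheory Filter

noncomputable section

/-- for a convex `b : ℝ^k → ℝ`, the seller-favorable payment
function `x ↦ b′(x;x) − b(x)` is upper semicontinuous. -/
theorem stmt19 {k : ℕ} (hk : 1 ≤ k)
    (b : E k → ℝ) (hconv : ConvexOn ℝ Set.univ b) :
    UpperSemicontinuous (fun x => dirDeriv b x x - b x) := by
  have hb : Continuous b := hconv.locallyLipschitz.continuous
  -- slope function
  set φ : E k → ℝ → ℝ := fun x t => (b (x + t • x) - b x) / t with hφ
  have hmono : ∀ x : E k, MonotoneOn (φ x) {t : ℝ | t ≠ 0} := by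
    intro x
    have hg : ConvexOn ℝ Set.univ (fun t : ℝ => b (x + t • x)) := by
      have := hconv.comp_affineMap (AffineMap.lineMap (x : E k) (x + x))
      simpa [AffineMap.lineMap_apply, Function.comp_def, add_comm] using this
    intro s hs t ht hst
    have := hg.secant_mono (a := 0) (x := s) (y := t) trivial trivial trivial hs ht hst
    simpa [φ] using this
  have hbdd : ∀ x : E k, BddBelow (φ x '' Set.Ioi 0) := by
    intro x
    refine ⟨φ x (-1), ?_⟩
    rintro _ ⟨t, ht, rfl⟩
    exact hmono x (by norm_num) (Set.mem_setOf.2 (ne_of_gt ht)) (by linarith [Set.mem_Ioi.1 ht])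
  have htend : ∀ x : E k, Tendsto (φ x) (nhdsWithin (0:ℝ) (Set.Ioi 0))
      (nhds (sInf (φ x '' Set.Ioi 0))) := by
    intro x
    exact MonotoneOn.tendsto_nhdsGT
      ((hmono x).mono (fun t ht => ne_of_gt ht)) (hbdd x)
  have hdd : ∀ x : E k, dirDeriv b x x = sInf (φ x '' Set.Ioi 0) := fun x =>
    (htend x).limUnder_eq
  intro x y hy
  simp only [hdd x] at hy
  -- hy : sInf (φ x '' Ioi 0) - b x < y
  have h1 : sInf (φ x '' Set.Ioi 0) < y + b x := by linarith
  obtain ⟨_, ⟨t, ht, rfl⟩, hlt⟩ := exists_lt_of_csInf_lt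
    (Set.nonempty_Ioi.image _) h1
  have ht0 : (0:ℝ) < t := ht
  have hcont : Continuous (fun x' : E k => φ x' t - b x') := by
    fun_prop
  have hx : φ x t - b x < y := by linarith
  filter_upwards [hcont.continuousAt.eventually_lt continuousAt_const hx] with x' hx'
  have hle : dirDeriv b x' x' ≤ φ x' t := by
    rw [hdd x']
    exact csInf_le (hbdd x') ⟨t, ht, rfl⟩
  calc dirDeriv b x' x' - b x' ≤ φ x' t - b x' := by linarith
    _ < y := hx'
end
end
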